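/- If Γ is a connected admissible graph, then χ(Γ) ≤ 1. Moreover χ(Γ) = 1 if and only if every path P of Γ has the following property: every connected component C of Γ∖P has exactly one vertex in common with P and satisfies χ(C) = 1. Furthermore, if some single path of Γ has this property, then already χ(Γ) = 1. -/

import Mathlib

noncomputable section

open Filter Topology

/-- A finite, directed, edge-colored graph with colors in `Fin s`,
with vertices living in an ambient type `V`. -/
structure CGraph (V : Type) (s : ℕ) where
  verts : Set V
  finite : verts.Finite
  nonem : verts.Nonempty
  E : Fin s → V → V → Prop
  memL : ∀ r a b, E r a b → a ∈ verts
  memR : ∀ r a b, E r a b → b ∈ verts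

namespace CGraph

variable {V W : Type} {s : ℕ}

/-- A graph is trivial iff it has no edges (of any color). -/
def Trivial (Γ : CGraph V s) : Prop := ∀ r a b, ¬ Γ.E r a b

/-- Two vertices are adjacent iff there is an edge (of any color, either direction)
between them. -/
def Adj (Γ : CGraph V s) (a b : V) : Prop := ∃ r, Γ.E r a b ∨ Γ.E r b a

/-- A graph is connected iff any two of its vertices are joined by a finite chain of
edges (of any colors and either direction). -/
def Connected (Γ : CGraph V s) : Prop :=
  ∀ a ∈ Γ.verts, ∀ b ∈ Γ.verts, Relation.ReflTransGen Γ.Adj a b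

/-- `Γ'` is a subgraph of `Γ`. -/
def Subgraph (Γ' Γ : CGraph V s) : Prop :=
  Γ'.verts ⊆ Γ.verts ∧ ∀ r a b, Γ'.E r a b → Γ.E r a b

/-- `C` is a connected component of `Γ`: a maximal connected subgraph. -/
def IsComponent (C Γ : CGraph V s) : Prop :=
  C.Subgraph Γ ∧ C.Connected ∧
    ∀ C' : CGraph V s, C'.Subgraph Γ → C'.Connected → C.Subgraph C' → C'.Subgraph C

/-- A graph is admissible iff no two distinct edges of the same color begin at the
same vertex or end at the same vertex. -/
def Admissible (Γ : CGraph V s) : Prop :=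
  (∀ r a b b', Γ.E r a b → Γ.E r a b' → b = b') ∧
    (∀ r a a' b, Γ.E r a b → Γ.E r a' b → a = a')

/-- `Γ.mono r` is `Γ` with all edges not of color `r` removed. -/
def mono (Γ : CGraph V s) (r : Fin s) : CGraph V s where
  verts := Γ.verts
  finite := Γ.finite
  nonem := Γ.nonem
  E := fun r' a b => r' = r ∧ Γ.E r' a b
  memL := fun r' a b h => Γ.memL r' a b h.2
  memR := fun r' a b h => Γ.memR r' a b h.2

/-- An `r`-path of `Γ` is a non-trivial connected component of `Γ.mono r`. -/
def IsRPath (P Γ : CGraph V s) (r : Fin s) : Prop :=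
  P.IsComponent (Γ.mono r) ∧ ¬ P.Trivial

/-- A path of `Γ` is an `r`-path for some color `r`. -/
def IsPathOf (P Γ : CGraph V s) : Prop := ∃ r, P.IsRPath Γ r

/-- A path is closed (a closed circuit) iff every one of its vertices has an
outgoing edge. -/
def Closed (P : CGraph V s) : Prop := ∀ a ∈ P.verts, ∃ r b, P.E r a b

/-- A loop of `Γ` is a path of `Γ` which is a closed circuit. -/
def IsLoopOf (P Γ : CGraph V s) : Prop := P.IsPathOf Γ ∧ P.Closed

/-- A string of `Γ` is a path of `Γ` which is not a loop. -/
def IsStringOf (P Γ : CGraph V s) : Prop := P.IsPathOf Γ ∧ ¬ P.Closed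

/-- The number of edges of `Γ` (counting colors). -/
def edgeCount (Γ : CGraph V s) : ℕ :=
  Nat.card {p : Fin s × V × V // Γ.E p.1 p.2.1 p.2.2}

/-- The number of loops (of any color) of `Γ`. -/
def loopCount (Γ : CGraph V s) : ℕ :=
  Nat.card {P : CGraph V s // P.IsLoopOf Γ}

/-- The number of vertices of `Γ`. -/
def vertCount (Γ : CGraph V s) : ℕ := Nat.card Γ.verts

/-- The loop-characteristic `χ(Γ) = V(Γ) - E(Γ) + L(Γ)`. -/
def chi (Γ : CGraph V s) : ℤ :=
  (Γ.vertCount : ℤ) - (Γ.edgeCount : ℤ) + (Γ.loopCount : ℤ)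

/-- `Γ.erase P` is the graph obtained from `Γ` by removing all edges of `P`. -/
def erase (Γ P : CGraph V s) : CGraph V s where
  verts := Γ.verts
  finite := Γ.finite
  nonem := Γ.nonem
  E := fun r a b => Γ.E r a b ∧ ¬ P.E r a b
  memL := fun r a b h => Γ.memL r a b h.1
  memR := fun r a b h => Γ.memR r a b h.1

/-- A graph is strongly admissible (w.r.t. `d : Fin s → ℕ∞`) iff it is admissible,
every `r`-loop has length `d r`, and every `r`-string has length `< d r`. -/
def StronglyAdmissible (d : Fin s → ℕ∞) (Γ : CGraph V s) : Prop :=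
  Γ.Admissible ∧ ∀ r P, IsRPath P Γ r →
    (P.Closed → (P.edgeCount : ℕ∞) = d r) ∧ (¬ P.Closed → (P.edgeCount : ℕ∞) < d r)

/-- The quotient of `Γ` by a partition (setoid) `π` of the ambient vertex type. -/
def quot (Γ : CGraph V s) (π : Setoid V) : CGraph (Quotient π) s where
  verts := Quotient.mk π '' Γ.verts
  finite := Γ.finite.image _
  nonem := Γ.nonem.image _
  E := fun r A B => ∃ a b, Γ.E r a b ∧ Quotient.mk π a = A ∧ Quotient.mk π b = B
  memL := fun r A B h => by
    obtain ⟨a, b, he, ha, hb⟩ := h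
    exact ⟨a, Γ.memL r a b he, ha⟩
  memR := fun r A B h => by
    obtain ⟨a, b, he, ha, hb⟩ := h
    exact ⟨b, Γ.memR r a b he, hb⟩

/-- `π` is a congruence of `Γ`: for any two edges of the same color, the source
blocks agree iff the target blocks agree. -/
def IsCongruence (Γ : CGraph V s) (π : Setoid V) : Prop :=
  ∀ r a₁ b₁ a₂ b₂, Γ.E r a₁ b₁ → Γ.E r a₂ b₂ → (π.r a₁ a₂ ↔ π.r b₁ b₂)

/-- `π` is a strong congruence of `Γ`: a congruence whose quotient is strongly
admissible. -/
def IsStrongCongruence (d : Fin s → ℕ∞) (Γ : CGraph V s) (π : Setoid V) : Prop :=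
  Γ.IsCongruence π ∧ (Γ.quot π).StronglyAdmissible d

/-- Isomorphism of edge-colored graphs: a bijection between the vertex sets
preserving the `r`-edges in both directions, for every color `r`. -/
def Iso (Γ₁ : CGraph V s) (Γ₂ : CGraph W s) : Prop :=
  ∃ Φ : V → W, Set.BijOn Φ Γ₁.verts Γ₂.verts ∧
    ∀ r a b, a ∈ Γ₁.verts → b ∈ Γ₁.verts → (Γ₂.E r (Φ a) (Φ b) ↔ Γ₁.E r a b)

end CGraph

namespace CGraph

variable {V : Type} {s : ℕ}

open Classical in
lemma ext' {Γ₁ Γ₂ : CGraph V s} (hv : Γ₁.verts = Γ₂.verts)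
    (he : ∀ r a b, Γ₁.E r a b ↔ Γ₂.E r a b) : Γ₁ = Γ₂ := by
  cases Γ₁; cases Γ₂
  simp only [mk.injEq]
  constructor
  · exact hv
  · funext r a b; exact propext (he r a b)

/-- The set of (colored) edges of `Γ`. -/
def edgeSet (Γ : CGraph V s) : Set (Fin s × V × V) := {p | Γ.E p.1 p.2.1 p.2.2}

lemma edgeSet_finite (Γ : CGraph V s) : Γ.edgeSet.Finite := by
  apply Set.Finite.subset ((Set.finite_univ (α := Fin s)).prod (Γ.finite.prod Γ.finite))
  rintro ⟨r, a, b⟩ h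
  exact ⟨trivial, Γ.memL r a b h, Γ.memR r a b h⟩

lemma edgeCount_eq_ncard (Γ : CGraph V s) : Γ.edgeCount = Γ.edgeSet.ncard := by
  rw [edgeCount]; rw [show Γ.edgeSet.ncard = Nat.card Γ.edgeSet from (Nat.card_coe_set_eq _).symm]; rfl

lemma vertCount_eq_ncard (Γ : CGraph V s) : Γ.vertCount = Γ.verts.ncard := by
  rw [vertCount, Nat.card_coe_set_eq]

lemma Subgraph.refl (Γ : CGraph V s) : Γ.Subgraph Γ := ⟨le_refl _, fun _ _ _ h => h⟩

lemma Subgraph.trans {Γ₁ Γ₂ Γ₃ : CGraph V s} (h₁ : Γ₁.Subgraph Γ₂) (h₂ : Γ₂.Subgraph Γ₃) :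
    Γ₁.Subgraph Γ₃ :=
  ⟨h₁.1.trans h₂.1, fun r a b h => h₂.2 r a b (h₁.2 r a b h)⟩

lemma Subgraph.antisymm {Γ₁ Γ₂ : CGraph V s} (h₁ : Γ₁.Subgraph Γ₂) (h₂ : Γ₂.Subgraph Γ₁) :
    Γ₁ = Γ₂ :=
  ext' (h₁.1.antisymm h₂.1) (fun r a b => ⟨h₁.2 r a b, h₂.2 r a b⟩)

lemma adj_symm (Γ : CGraph V s) {a b : V} (h : Γ.Adj a b) : Γ.Adj b a := by
  obtain ⟨r, h⟩ := h; exact ⟨r, h.symm⟩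

lemma reach_symm (Γ : CGraph V s) {a b : V} (h : Relation.ReflTransGen Γ.Adj a b) :
    Relation.ReflTransGen Γ.Adj b a :=
  (@Relation.ReflTransGen.symmetric _ Γ.Adj ⟨fun _ _ => Γ.adj_symm⟩).symm _ _ h

lemma Subgraph.adj {Γ' Γ : CGraph V s} (h : Γ'.Subgraph Γ) {a b : V} (ha : Γ'.Adj a b) :
    Γ.Adj a b := by
  obtain ⟨r, ha⟩ := ha
  exact ⟨r, ha.imp (h.2 r a b) (h.2 r b a)⟩

lemma Subgraph.reach {Γ' Γ : CGraph V s} (h : Γ'.Subgraph Γ) {a b : V}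
    (ha : Relation.ReflTransGen Γ'.Adj a b) : Relation.ReflTransGen Γ.Adj a b :=
  Relation.ReflTransGen.mono (fun _ _ => h.adj) _ _ ha

lemma subgraph_injective (Γ : CGraph V s) :
    Set.InjOn (fun Δ : CGraph V s => (Δ.verts, Δ.edgeSet)) {Δ | Δ.Subgraph Γ} := by
  intro Δ₁ _ Δ₂ _ h
  simp only [Prod.mk.injEq] at h
  refine ext' h.1 (fun r a b => ?_)
  have := congrArg (fun S => (r, a, b) ∈ S) h.2
  simpa [edgeSet] using this

lemma subgraphSet_finite (Γ : CGraph V s) : {Δ : CGraph V s | Δ.Subgraph Γ}.Finite := by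
  apply Set.Finite.of_finite_image ?_ (subgraph_injective Γ)
  apply Set.Finite.subset ((Γ.finite.finite_subsets).prod (Γ.edgeSet_finite.finite_subsets))
  rintro ⟨vs, es⟩ ⟨Δ, hΔ, h⟩
  cases h
  constructor
  · exact hΔ.1
  · rintro ⟨r, a, b⟩ h; exact hΔ.2 r a b h

end CGraph
namespace CGraph

variable {V : Type} {s : ℕ}

/-- The connected component of `Γ` containing vertex `v`. -/
def compOf (Γ : CGraph V s) (v : V) (hv : v ∈ Γ.verts) : CGraph V s where
  verts := {w ∈ Γ.verts | Relation.ReflTransGen Γ.Adj v w}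
  finite := Γ.finite.subset (Set.sep_subset _ _)
  nonem := ⟨v, hv, Relation.ReflTransGen.refl⟩
  E := fun r a b => Γ.E r a b ∧ Relation.ReflTransGen Γ.Adj v a
  memL := fun r a b h => ⟨Γ.memL r a b h.1, h.2⟩
  memR := fun r a b h => ⟨Γ.memR r a b h.1, h.2.tail ⟨r, Or.inl h.1⟩⟩

lemma mem_compOf_self (Γ : CGraph V s) (v : V) (hv : v ∈ Γ.verts) :
    v ∈ (Γ.compOf v hv).verts := ⟨hv, Relation.ReflTransGen.refl⟩

lemma compOf_subgraph (Γ : CGraph V s) (v : V) (hv : v ∈ Γ.verts) :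
    (Γ.compOf v hv).Subgraph Γ :=
  ⟨Set.sep_subset _ _, fun _ _ _ h => h.1⟩

lemma mem_compOf {Γ : CGraph V s} {v w : V} {hv : v ∈ Γ.verts} :
    w ∈ (Γ.compOf v hv).verts ↔ w ∈ Γ.verts ∧ Relation.ReflTransGen Γ.Adj v w := Iff.rfl

lemma reach_lift {Γ : CGraph V s} {v : V} {hv : v ∈ Γ.verts} {a b : V}
    (ha : Relation.ReflTransGen Γ.Adj v a) (hab : Relation.ReflTransGen Γ.Adj a b) :
    Relation.ReflTransGen (Γ.compOf v hv).Adj a b := by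
  induction hab with
  | refl => exact Relation.ReflTransGen.refl
  | @tail x y hxy hadj ih =>
    refine ih.tail ?_
    have hx : Relation.ReflTransGen Γ.Adj v x := ha.trans hxy
    obtain ⟨r, h | h⟩ := hadj
    · exact ⟨r, Or.inl ⟨h, hx⟩⟩
    · exact ⟨r, Or.inr ⟨h, hx.tail ⟨r, Or.inr h⟩⟩⟩

lemma compOf_isComponent (Γ : CGraph V s) (v : V) (hv : v ∈ Γ.verts) :
    (Γ.compOf v hv).IsComponent Γ := by
  refine ⟨Γ.compOf_subgraph v hv, ?_, ?_⟩
  · rintro a ⟨haΓ, hva⟩ b ⟨hbΓ, hvb⟩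
    have h1 : Relation.ReflTransGen (Γ.compOf v hv).Adj v a := reach_lift .refl hva
    have h2 : Relation.ReflTransGen (Γ.compOf v hv).Adj v b := reach_lift .refl hvb
    exact ((@Relation.ReflTransGen.symmetric _ (Γ.compOf v hv).Adj
      ⟨fun _ _ => (Γ.compOf v hv).adj_symm⟩).symm _ _ h1).trans h2
  · intro C' hsub hconn hups
    have hvC' : v ∈ C'.verts := hups.1 (Γ.mem_compOf_self v hv)
    have hverts : C'.verts ⊆ (Γ.compOf v hv).verts := by
      intro w hw
      exact ⟨hsub.1 hw, hsub.reach (hconn v hvC' w hw)⟩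
    refine ⟨hverts, fun r a b h => ?_⟩
    have ha : a ∈ C'.verts := C'.memL r a b h
    exact ⟨hsub.2 r a b h, (hverts ha).2⟩

lemma IsComponent.eq_compOf {C Γ : CGraph V s} (hC : C.IsComponent Γ) {v : V}
    (hv : v ∈ C.verts) : C = Γ.compOf v (hC.1.1 hv) := by
  have hvΓ : v ∈ Γ.verts := hC.1.1 hv
  have hsub : C.Subgraph (Γ.compOf v hvΓ) := by
    refine ⟨?_, fun r a b h => ?_⟩
    · intro w hw
      exact ⟨hC.1.1 hw, hC.1.reach (hC.2.1 v hv w hw)⟩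
    · exact ⟨hC.1.2 r a b h, hC.1.reach (hC.2.1 v hv a (C.memL r a b h))⟩
  have := hC.2.2 _ (Γ.compOf_subgraph v hvΓ) (Γ.compOf_isComponent v hvΓ).2.1 hsub
  exact hsub.antisymm this

lemma IsComponent.eq_of_mem {C C' Γ : CGraph V s} (hC : C.IsComponent Γ)
    (hC' : C'.IsComponent Γ) {v : V} (hv : v ∈ C.verts) (hv' : v ∈ C'.verts) : C = C' := by
  rw [hC.eq_compOf hv, hC'.eq_compOf hv']

/-- Components absorb incident edges (left-vertex version). -/
lemma IsComponent.edge_of_memL {C Γ : CGraph V s} (hC : C.IsComponent Γ) {r : Fin s}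
    {a b : V} (ha : a ∈ C.verts) (h : Γ.E r a b) : C.E r a b := by
  rw [hC.eq_compOf ha]
  exact ⟨h, Relation.ReflTransGen.refl⟩

lemma IsComponent.edge_of_memR {C Γ : CGraph V s} (hC : C.IsComponent Γ) {r : Fin s}
    {a b : V} (hb : b ∈ C.verts) (h : Γ.E r a b) : C.E r a b := by
  rw [hC.eq_compOf hb]
  exact ⟨h, Relation.ReflTransGen.single ⟨r, Or.inr h⟩⟩

lemma IsComponent.closed_adj {C Γ : CGraph V s} (hC : C.IsComponent Γ) {a b : V}
    (ha : a ∈ C.verts) (h : Γ.Adj a b) : b ∈ C.verts ∧ C.Adj a b := by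
  obtain ⟨r, h | h⟩ := h
  · have := hC.edge_of_memL ha h
    exact ⟨C.memR r a b this, r, Or.inl this⟩
  · have := hC.edge_of_memR ha h
    exact ⟨C.memL r b a this, r, Or.inr this⟩

/-- The set of connected components of `Γ`. -/
def components (Γ : CGraph V s) : Set (CGraph V s) := {C | C.IsComponent Γ}

lemma components_finite (Γ : CGraph V s) : Γ.components.Finite :=
  Γ.subgraphSet_finite.subset (fun _ hC => hC.1)

lemma exists_component (Γ : CGraph V s) {v : V} (hv : v ∈ Γ.verts) :
    ∃ C ∈ Γ.components, v ∈ C.verts :=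
  ⟨Γ.compOf v hv, Γ.compOf_isComponent v hv, Γ.mem_compOf_self v hv⟩

end CGraph
lemma ncard_biUnion_helper {α ι : Type*} (K : Finset ι) (f : ι → Set α)
    (hfin : ∀ i ∈ K, (f i).Finite)
    (hdisj : ∀ i ∈ K, ∀ j ∈ K, i ≠ j → Disjoint (f i) (f j)) :
    (⋃ i ∈ K, f i).ncard = ∑ i ∈ K, (f i).ncard := by
  classical
  induction K using Finset.induction with
  | empty => simp
  | @insert a T ha ih =>
    have hfin' : ∀ i ∈ T, (f i).Finite := fun i hi => hfin i (Finset.mem_insert_of_mem hi)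
    have hdisj' : ∀ i ∈ T, ∀ j ∈ T, i ≠ j → Disjoint (f i) (f j) := fun i hi j hj hij =>
      hdisj i (Finset.mem_insert_of_mem hi) j (Finset.mem_insert_of_mem hj) hij
    have hdisjU : Disjoint (f a) (⋃ i ∈ T, f i) := by
      rw [Set.disjoint_iUnion_right]
      intro i
      rw [Set.disjoint_iUnion_right]
      intro hi
      exact hdisj a (Finset.mem_insert_self a T) i (Finset.mem_insert_of_mem hi)
        (fun h => ha (h ▸ hi))
    have hfinU : (⋃ i ∈ T, f i).Finite := by
      rw [← Finset.set_biUnion_coe]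
      exact Set.Finite.biUnion T.finite_toSet (fun i hi => hfin' i hi)
    rw [Finset.set_biUnion_insert, Finset.sum_insert ha,
      Set.ncard_union_eq hdisjU (hfin a (Finset.mem_insert_self a T)) hfinU,
      ih hfin' hdisj']

namespace CGraph

variable {V : Type} {s : ℕ}

lemma mem_components_toFinset {Γ C : CGraph V s} :
    C ∈ Γ.components_finite.toFinset ↔ C.IsComponent Γ := Set.Finite.mem_toFinset _

lemma verts_disjoint {Γ C C' : CGraph V s} (hC : C.IsComponent Γ) (hC' : C'.IsComponent Γ)
    (h : C ≠ C') : Disjoint C.verts C'.verts := by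
  rw [Set.disjoint_left]
  intro v hv hv'
  exact h (hC.eq_of_mem hC' hv hv')

lemma ncard_inter_sum (Γ : CGraph V s) (S : Set V) (hS : S ⊆ Γ.verts) :
    S.ncard = ∑ C ∈ Γ.components_finite.toFinset, (C.verts ∩ S).ncard := by
  rw [← ncard_biUnion_helper _ (fun C => C.verts ∩ S)
    (fun C _ => Γ.finite.subset (fun x hx => hS hx.2))
    (fun C hC C' hC' hne => Disjoint.mono Set.inter_subset_left Set.inter_subset_left
      (verts_disjoint (mem_components_toFinset.mp hC) (mem_components_toFinset.mp hC')
        hne))]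
  congr 1
  apply Set.eq_of_subset_of_subset
  · intro x hx
    obtain ⟨C, hC, hxC⟩ := Γ.exists_component (hS hx)
    exact Set.mem_biUnion (mem_components_toFinset.mpr hC) ⟨hxC, hx⟩
  · intro x hx
    simp only [Set.mem_iUnion] at hx
    obtain ⟨C, _, _, hx⟩ := hx
    exact hx

lemma vertCount_sum (Γ : CGraph V s) :
    Γ.vertCount = ∑ C ∈ Γ.components_finite.toFinset, C.vertCount := by
  rw [vertCount_eq_ncard, Γ.ncard_inter_sum Γ.verts (subset_refl _)]
  apply Finset.sum_congr rfl
  intro C hC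
  rw [vertCount_eq_ncard]
  congr 1
  exact Set.inter_eq_left.mpr (mem_components_toFinset.mp hC).1.1

lemma edgeCount_sum (Γ : CGraph V s) :
    Γ.edgeCount = ∑ C ∈ Γ.components_finite.toFinset, C.edgeCount := by
  have cover : Γ.edgeSet = ⋃ C ∈ Γ.components_finite.toFinset, C.edgeSet := by
    apply Set.eq_of_subset_of_subset
    · intro p h
      have h' : Γ.E p.1 p.2.1 p.2.2 := h
      have ha : p.2.1 ∈ Γ.verts := Γ.memL _ _ _ h'
      refine Set.mem_biUnion (mem_components_toFinset.mpr
        (Γ.compOf_isComponent p.2.1 ha)) ?_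
      have := (Γ.compOf_isComponent p.2.1 ha).edge_of_memL (Γ.mem_compOf_self p.2.1 ha) h'
      exact this
    · intro p hp
      simp only [Set.mem_iUnion] at hp
      obtain ⟨C, hC, hp⟩ := hp
      have hC' : C.IsComponent Γ := mem_components_toFinset.mp hC
      exact hC'.1.2 p.1 p.2.1 p.2.2 hp
  rw [edgeCount_eq_ncard, cover, ncard_biUnion_helper]
  · exact Finset.sum_congr rfl (fun C _ => (edgeCount_eq_ncard C).symm)
  · intro C _
    exact edgeSet_finite C
  · intro C hC C' hC' hne
    have h1 : C.IsComponent Γ := mem_components_toFinset.mp hC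
    have h2 : C'.IsComponent Γ := mem_components_toFinset.mp hC'
    rw [Set.disjoint_left]
    intro p h h'
    exact Set.disjoint_left.mp (verts_disjoint h1 h2 hne)
      (C.memL p.1 p.2.1 p.2.2 h) (C'.memL p.1 p.2.1 p.2.2 h')

lemma edgeCount_erase_add (Γ P : CGraph V s) (hP : ∀ r a b, P.E r a b → Γ.E r a b) :
    Γ.edgeCount = (Γ.erase P).edgeCount + P.edgeCount := by
  have cover : Γ.edgeSet = (Γ.erase P).edgeSet ∪ P.edgeSet := by
    apply Set.eq_of_subset_of_subset
    · intro p h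
      have h' : Γ.E p.1 p.2.1 p.2.2 := h
      by_cases hp : P.E p.1 p.2.1 p.2.2
      · exact Or.inr hp
      · exact Or.inl ⟨h', hp⟩
    · intro p hp
      cases hp with
      | inl h => exact h.1
      | inr h => exact hP p.1 p.2.1 p.2.2 h
  have hdisj : Disjoint (Γ.erase P).edgeSet P.edgeSet := by
    rw [Set.disjoint_left]
    intro p h h'
    exact h.2 h'
  rw [edgeCount_eq_ncard, cover,
    Set.ncard_union_eq hdisj (edgeSet_finite _) (edgeSet_finite _),
    edgeCount_eq_ncard, edgeCount_eq_ncard]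

end CGraph
/-- `walk R n a b`: there is a chain of `n` `R`-steps from `a` to `b`. -/
def walk {V : Type} (R : V → V → Prop) : ℕ → V → V → Prop
  | 0 => Eq
  | n+1 => fun a b => ∃ c, R a c ∧ walk R n c b

lemma walk_snoc {V : Type} {R : V → V → Prop} :
    ∀ {n a b c}, walk R n a b → R b c → walk R (n + 1) a c := by
  intro n
  induction n with
  | zero =>
    intro a b c hab hbc
    cases hab
    exact ⟨c, hbc, rfl⟩
  | succ m ih =>
    rintro a b c ⟨d, had, hdb⟩ hbc
    exact ⟨d, had, ih hdb hbc⟩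

lemma reflTransGen_iff_walk {V : Type} {R : V → V → Prop} {a b : V} :
    Relation.ReflTransGen R a b ↔ ∃ n, walk R n a b := by
  constructor
  · intro h
    induction h with
    | refl => exact ⟨0, rfl⟩
    | tail _ hbc ih =>
      obtain ⟨n, hw⟩ := ih
      exact ⟨n + 1, walk_snoc hw hbc⟩
  · rintro ⟨n, hw⟩
    induction n generalizing a with
    | zero => cases hw; rfl
    | succ m ih =>
      obtain ⟨c, hac, hcb⟩ := hw
      exact Relation.ReflTransGen.head hac (ih hcb)

lemma walk_last {V : Type} {R : V → V → Prop} :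
    ∀ {n a b}, walk R (n + 1) a b → ∃ c, walk R n a c ∧ R c b := by
  intro n
  induction n with
  | zero =>
    rintro a b ⟨c, hac, hcb⟩
    cases hcb
    exact ⟨a, rfl, hac⟩
  | succ m ih =>
    rintro a b ⟨c, hac, hcb⟩
    obtain ⟨d, hcd, hdb⟩ := ih hcb
    exact ⟨d, ⟨c, hac, hcd⟩, hdb⟩

namespace CGraph

variable {V : Type} {s : ℕ}

lemma vertCount_le_edgeCount_add_one (Δ : CGraph V s) (hconn : Δ.Connected) :
    Δ.vertCount ≤ Δ.edgeCount + 1 := by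
  classical
  obtain ⟨v₀, hv₀⟩ := Δ.nonem
  set d : V → ℕ := fun w => sInf {n | walk Δ.Adj n v₀ w} with hd
  -- every non-root vertex has an adjacent vertex strictly closer to the root
  have hstep : ∀ w ∈ Δ.verts, w ≠ v₀ → ∃ u, Δ.Adj u w ∧ d u < d w := by
    intro w hw hne
    have hreach : Relation.ReflTransGen Δ.Adj v₀ w := hconn v₀ hv₀ w hw
    obtain ⟨n, hn⟩ := reflTransGen_iff_walk.mp hreach
    have hne' : {n | walk Δ.Adj n v₀ w}.Nonempty := ⟨n, hn⟩
    have hmem : walk Δ.Adj (d w) v₀ w := Nat.sInf_mem hne'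
    have hdpos : d w ≠ 0 := by
      intro h0
      rw [h0] at hmem
      exact hne hmem.symm
    obtain ⟨m, hm⟩ := Nat.exists_eq_succ_of_ne_zero hdpos
    rw [hm] at hmem
    obtain ⟨u, hwu, huw⟩ := walk_last hmem
    refine ⟨u, huw, ?_⟩
    calc d u ≤ m := Nat.sInf_le hwu
    _ < d w := by omega
  -- injection from non-root vertices into edges
  have key : ∀ w : {w // w ∈ Δ.verts ∧ w ≠ v₀}, ∃ e : Δ.edgeSet,
      (e.1.2.1 = w.1 ∧ d e.1.2.2 < d w.1) ∨ (e.1.2.2 = w.1 ∧ d e.1.2.1 < d w.1) := by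
    rintro ⟨w, hw, hne⟩
    obtain ⟨u, ⟨r, hadj | hadj⟩, hlt⟩ := hstep w hw hne
    · exact ⟨⟨(r, u, w), hadj⟩, Or.inr ⟨rfl, hlt⟩⟩
    · exact ⟨⟨(r, w, u), hadj⟩, Or.inl ⟨rfl, hlt⟩⟩
  choose f hf using key
  have hinj : Function.Injective f := by
    rintro w₁ w₂ heq
    have h1 := hf w₁
    have h2 := hf w₂
    rw [heq] at h1
    apply Subtype.ext
    rcases h1 with ⟨ha1, hb1⟩ | ⟨hb1, ha1⟩ <;> rcases h2 with ⟨ha2, hb2⟩ | ⟨hb2, ha2⟩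
    · rw [← ha1, ← ha2]
    · exfalso
      rw [ha1] at ha2
      rw [hb2] at hb1
      omega
    · exfalso
      rw [hb1] at hb2
      rw [ha2] at ha1
      omega
    · rw [← hb1, ← hb2]
  have hfin : Finite Δ.edgeSet := Δ.edgeSet_finite.to_subtype
  have hcard := Nat.card_le_card_of_injective f hinj
  have hc1 : Nat.card {w // w ∈ Δ.verts ∧ w ≠ v₀} = Δ.vertCount - 1 := by
    have : Nat.card {w // w ∈ Δ.verts ∧ w ≠ v₀} = Nat.card ↥(Δ.verts \ {v₀}) := by
      apply Nat.card_congr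
      apply Equiv.subtypeEquiv (Equiv.refl V)
      intro w
      simp [Set.mem_diff]
    rw [this, Nat.card_coe_set_eq, Set.ncard_diff_singleton_of_mem hv₀,
      vertCount_eq_ncard]
  have hΔv : 0 < Δ.vertCount := by
    rw [vertCount_eq_ncard]
    exact (Set.ncard_pos Δ.finite).mpr ⟨v₀, hv₀⟩
  have : Δ.vertCount - 1 ≤ Δ.edgeCount := by
    rw [← hc1, edgeCount]
    exact hcard
  omega

/-- out-uniqueness across colors: at most one edge leaves each vertex. -/
def OutUnique (Δ : CGraph V s) : Prop :=
  ∀ r a b r' b', Δ.E r a b → Δ.E r' a b' → r = r' ∧ b = b'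

/-- in-uniqueness across colors: at most one edge enters each vertex. -/
def InUnique (Δ : CGraph V s) : Prop :=
  ∀ r a b r' a', Δ.E r a b → Δ.E r' a' b → r = r' ∧ a = a'

lemma srcMap_injective {Δ : CGraph V s} (hout : Δ.OutUnique) :
    Function.Injective (fun e : Δ.edgeSet => (⟨e.1.2.1, Δ.memL _ _ _ e.2⟩ : Δ.verts)) := by
  rintro ⟨⟨r₁, a₁, b₁⟩, h₁⟩ ⟨⟨r₂, a₂, b₂⟩, h₂⟩ heq
  simp only [Subtype.mk.injEq] at heq
  subst heq
  obtain ⟨hr, hb⟩ := hout r₁ a₁ b₁ r₂ b₂ h₁ h₂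
  subst hr; subst hb; rfl

lemma tgtMap_injective {Δ : CGraph V s} (hin : Δ.InUnique) :
    Function.Injective (fun e : Δ.edgeSet => (⟨e.1.2.2, Δ.memR _ _ _ e.2⟩ : Δ.verts)) := by
  rintro ⟨⟨r₁, a₁, b₁⟩, h₁⟩ ⟨⟨r₂, a₂, b₂⟩, h₂⟩ heq
  simp only [Subtype.mk.injEq] at heq
  subst heq
  obtain ⟨hr, ha⟩ := hin r₁ a₁ b₁ r₂ a₂ h₁ h₂
  subst hr; subst ha; rfl

lemma edgeCount_le_vertCount {Δ : CGraph V s} (hout : Δ.OutUnique) :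
    Δ.edgeCount ≤ Δ.vertCount := by
  haveI : Finite Δ.verts := Δ.finite.to_subtype
  exact Nat.card_le_card_of_injective _ (srcMap_injective hout)

lemma edgeCount_eq_vertCount_of_closed {Δ : CGraph V s} (hout : Δ.OutUnique)
    (hcl : Δ.Closed) : Δ.edgeCount = Δ.vertCount := by
  haveI : Finite Δ.verts := Δ.finite.to_subtype
  apply Nat.card_eq_of_bijective _ (Function.Bijective.comp (Equiv.refl _).bijective
    ⟨srcMap_injective hout, ?_⟩)
  rintro ⟨v, hv⟩
  obtain ⟨r, b, hb⟩ := hcl v hv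
  exact ⟨⟨(r, v, b), hb⟩, rfl⟩

lemma forall_in_edge_of_closed {Δ : CGraph V s} (hout : Δ.OutUnique) (hin : Δ.InUnique)
    (hcl : Δ.Closed) : ∀ v ∈ Δ.verts, ∃ r u, Δ.E r u v := by
  haveI : Finite Δ.verts := Δ.finite.to_subtype
  haveI : Finite Δ.edgeSet := Δ.edgeSet_finite.to_subtype
  have hcards : Nat.card Δ.edgeSet = Nat.card Δ.verts :=
    edgeCount_eq_vertCount_of_closed hout hcl
  have hbij : Function.Bijective
      (fun e : Δ.edgeSet => (⟨e.1.2.2, Δ.memR _ _ _ e.2⟩ : Δ.verts)) :=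
    (Nat.bijective_iff_injective_and_card _).mpr ⟨tgtMap_injective hin, hcards⟩
  intro v hv
  obtain ⟨⟨⟨r, a, b⟩, he⟩, heq⟩ := hbij.2 ⟨v, hv⟩
  simp only [Subtype.mk.injEq] at heq
  exact ⟨r, a, heq ▸ he⟩

lemma edgeCount_succ_le_vertCount_of_not_closed {Δ : CGraph V s} (hout : Δ.OutUnique)
    (hcl : ¬ Δ.Closed) : Δ.edgeCount + 1 ≤ Δ.vertCount := by
  simp only [Closed, not_forall] at hcl
  obtain ⟨v₀, hv₀, hno⟩ := hcl
  push_neg at hno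
  haveI : Finite ↥(Δ.verts \ {v₀}) := (Δ.finite.subset Set.diff_subset).to_subtype
  have hinj : Function.Injective (fun e : Δ.edgeSet =>
      (⟨e.1.2.1, Δ.memL _ _ _ e.2, by
        intro h
        simp only [Set.mem_singleton_iff] at h
        exact hno e.1.1 e.1.2.2 (h ▸ e.2)⟩ : ↥(Δ.verts \ {v₀}))) := by
    rintro ⟨⟨r₁, a₁, b₁⟩, h₁⟩ ⟨⟨r₂, a₂, b₂⟩, h₂⟩ heq
    replace heq : a₁ = a₂ := congrArg Subtype.val heq
    subst heq
    obtain ⟨hr, hb⟩ := hout r₁ a₁ b₁ r₂ b₂ h₁ h₂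
    subst hr; subst hb; rfl
  have h1 := Nat.card_le_card_of_injective _ hinj
  have h2 : Nat.card ↥(Δ.verts \ {v₀}) = Δ.vertCount - 1 := by
    rw [Nat.card_coe_set_eq, Set.ncard_diff_singleton_of_mem hv₀,
      vertCount_eq_ncard]
  have hΔv : 0 < Δ.vertCount := by
    rw [vertCount_eq_ncard]
    exact (Set.ncard_pos Δ.finite).mpr ⟨v₀, hv₀⟩
  have : Δ.edgeCount ≤ Δ.vertCount - 1 := by rw [← h2]; exact h1
  omega

end CGraph
namespace CGraph

variable {V : Type} {s : ℕ}

lemma IsRPath.edge_color {P Γ : CGraph V s} {r : Fin s} (hP : P.IsRPath Γ r)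
    {r' : Fin s} {a b : V} (h : P.E r' a b) : r' = r ∧ Γ.E r a b := by
  have := hP.1.1.2 r' a b h
  exact ⟨this.1, this.1 ▸ this.2⟩

lemma IsRPath.outUnique {P Γ : CGraph V s} {r : Fin s} (hadm : Γ.Admissible)
    (hP : P.IsRPath Γ r) : P.OutUnique := by
  intro r₁ a b r₂ b' h₁ h₂
  obtain ⟨hr₁, hΓ₁⟩ := hP.edge_color h₁
  obtain ⟨hr₂, hΓ₂⟩ := hP.edge_color h₂
  exact ⟨hr₁.trans hr₂.symm, hadm.1 r a b b' hΓ₁ hΓ₂⟩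

lemma IsRPath.inUnique {P Γ : CGraph V s} {r : Fin s} (hadm : Γ.Admissible)
    (hP : P.IsRPath Γ r) : P.InUnique := by
  intro r₁ a b r₂ a' h₁ h₂
  obtain ⟨hr₁, hΓ₁⟩ := hP.edge_color h₁
  obtain ⟨hr₂, hΓ₂⟩ := hP.edge_color h₂
  exact ⟨hr₁.trans hr₂.symm, hadm.2 r a a' b hΓ₁ hΓ₂⟩

lemma exists_edge_of_not_trivial {P : CGraph V s} (h : ¬ P.Trivial) :
    ∃ r a b, P.E r a b := by
  simp only [Trivial, not_forall, not_not] at h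
  exact h

lemma IsRPath.edgeCount_pos {P Γ : CGraph V s} {r : Fin s} (hP : P.IsRPath Γ r) :
    0 < P.edgeCount := by
  rw [edgeCount_eq_ncard]
  apply (Set.ncard_pos P.edgeSet_finite).mpr
  obtain ⟨r', a, b, h⟩ := exists_edge_of_not_trivial hP.2
  exact ⟨(r', a, b), h⟩

open Classical in
lemma IsRPath.edgeCount_eq {P Γ : CGraph V s} {r : Fin s} (hadm : Γ.Admissible)
    (hP : P.IsRPath Γ r) :
    (P.edgeCount : ℤ) = (P.vertCount : ℤ) - 1 + (if P.Closed then 1 else 0) := by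
  have hout := hP.outUnique hadm
  have hconn : P.Connected := hP.1.2.1
  have hlow := P.vertCount_le_edgeCount_add_one hconn
  by_cases hcl : P.Closed
  · have := edgeCount_eq_vertCount_of_closed hout hcl
    simp only [hcl, if_true]
    omega
  · have := edgeCount_succ_le_vertCount_of_not_closed hout hcl
    simp only [hcl, if_false]
    omega

lemma exists_path_of_not_trivial (Γ : CGraph V s) (h : ¬ Γ.Trivial) :
    ∃ P : CGraph V s, P.IsPathOf Γ := by
  obtain ⟨r, a, b, he⟩ := exists_edge_of_not_trivial h
  have ha : a ∈ (Γ.mono r).verts := Γ.memL r a b he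
  refine ⟨(Γ.mono r).compOf a ha, r, (Γ.mono r).compOf_isComponent a ha, ?_⟩
  intro htriv
  refine htriv r a b ?_
  exact ((Γ.mono r).compOf_isComponent a ha).edge_of_memL ((Γ.mono r).mem_compOf_self a ha)
    ⟨rfl, he⟩

section Loops

variable {Γ Q : CGraph V s} {r : Fin s}

/-- For a closed graph `Q` all of whose edges are `r`-edges of the admissible
graph `Γ`, every `Γ`-`r`-edge at a vertex of `Q` already belongs to `Q`. -/
lemma closed_absorb (hadm : Γ.Admissible)
    (hsub : ∀ r' a b, Q.E r' a b → r' = r ∧ Γ.E r a b) (hcl : Q.Closed) :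
    (∀ v ∈ Q.verts, ∀ w, Γ.E r v w → Q.E r v w) ∧
      (∀ v ∈ Q.verts, ∀ u, Γ.E r u v → Q.E r u v) := by
  have hout : Q.OutUnique := by
    intro r₁ a b r₂ b' h₁ h₂
    obtain ⟨hr₁, hΓ₁⟩ := hsub r₁ a b h₁
    obtain ⟨hr₂, hΓ₂⟩ := hsub r₂ a b' h₂
    exact ⟨hr₁.trans hr₂.symm, hadm.1 r a b b' hΓ₁ hΓ₂⟩
  have hin : Q.InUnique := by
    intro r₁ a b r₂ a' h₁ h₂
    obtain ⟨hr₁, hΓ₁⟩ := hsub r₁ a b h₁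
    obtain ⟨hr₂, hΓ₂⟩ := hsub r₂ a' b h₂
    exact ⟨hr₁.trans hr₂.symm, hadm.2 r a a' b hΓ₁ hΓ₂⟩
  constructor
  · intro v hv w hΓ
    obtain ⟨r', w', hw'⟩ := hcl v hv
    obtain ⟨hr', hΓ'⟩ := hsub r' v w' hw'
    have : w = w' := hadm.1 r v w w' hΓ hΓ'
    subst this
    exact hr' ▸ hw'
  · intro v hv u hΓ
    obtain ⟨r', u', hu'⟩ := forall_in_edge_of_closed hout hin hcl v hv
    obtain ⟨hr', hΓ'⟩ := hsub r' u' v hu'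
    have : u = u' := hadm.2 r u u' v hΓ hΓ'
    subst this
    exact hr' ▸ hu'

/-- A connected closed graph whose edges are `r`-edges of an admissible `Γ` is a
component of `Γ.mono r`. -/
lemma closed_isComponent_mono (hadm : Γ.Admissible)
    (hsub : ∀ r' a b, Q.E r' a b → r' = r ∧ Γ.E r a b) (hconn : Q.Connected)
    (hcl : Q.Closed) : Q.IsComponent (Γ.mono r) := by
  obtain ⟨habs_out, habs_in⟩ := closed_absorb hadm hsub hcl
  have hverts : Q.verts ⊆ Γ.verts := by
    intro v hv
    obtain ⟨r', w, hw⟩ := hcl v hv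
    exact Γ.memL r v w (hsub r' v w hw).2
  have hQsub : Q.Subgraph (Γ.mono r) := by
    refine ⟨hverts, fun r' a b h => ?_⟩
    obtain ⟨hr', hΓ⟩ := hsub r' a b h
    exact ⟨hr', hr' ▸ hΓ⟩
  refine ⟨hQsub, hconn, ?_⟩
  intro C' hC'sub hC'conn hups
  obtain ⟨q₀, hq₀⟩ := Q.nonem
  have hstep : ∀ a b, a ∈ Q.verts → (Γ.mono r).Adj a b → b ∈ Q.verts := by
    intro a b ha hadj
    obtain ⟨r', h | h⟩ := hadj
    · exact Q.memR r a b (habs_out a ha b (h.1 ▸ h.2))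
    · exact Q.memL r b a (habs_in a ha b (h.1 ▸ h.2))
  have hvertsC' : C'.verts ⊆ Q.verts := by
    intro w hw
    have hreach : Relation.ReflTransGen C'.Adj q₀ w :=
      hC'conn q₀ (hups.1 hq₀) w hw
    clear hw
    induction hreach with
    | refl => exact hq₀
    | tail _ hadj ih => exact hstep _ _ ih (hC'sub.adj hadj)
  refine ⟨hvertsC', fun r' a b h => ?_⟩
  have h' := hC'sub.2 r' a b h
  have ha : a ∈ Q.verts := hvertsC' (C'.memL r' a b h)
  rw [h'.1]
  exact habs_out a ha b (h'.1 ▸ h'.2)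

end Loops

end CGraph
namespace CGraph

variable {V : Type} {s : ℕ}

/-- The set of loops of `Γ`. -/
def loopSet (Γ : CGraph V s) : Set (CGraph V s) := {Q | Q.IsLoopOf Γ}

lemma mono_subgraph (Γ : CGraph V s) (r : Fin s) : (Γ.mono r).Subgraph Γ :=
  ⟨subset_refl _, fun _ _ _ h => h.2⟩

lemma IsLoopOf.subgraph {Q Γ : CGraph V s} (h : Q.IsLoopOf Γ) : Q.Subgraph Γ := by
  obtain ⟨⟨r, hcomp, _⟩, _⟩ := h
  exact hcomp.1.trans (Γ.mono_subgraph r)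

lemma loopSet_finite (Γ : CGraph V s) : Γ.loopSet.Finite :=
  Γ.subgraphSet_finite.subset (fun _ hQ => hQ.subgraph)

lemma loopCount_eq_ncard (Γ : CGraph V s) : Γ.loopCount = Γ.loopSet.ncard := by
  rw [loopCount, Set.ncard]; rfl

/-- A loop of a subgraph-closed piece of `Γ` is a loop of `Γ`. -/
lemma IsLoopOf.of_subgraph {Q C Γ : CGraph V s} (hadm : Γ.Admissible)
    (hCsub : ∀ r a b, C.E r a b → Γ.E r a b) (hQ : Q.IsLoopOf C) : Q.IsLoopOf Γ := by
  obtain ⟨⟨r, hcomp, hnt⟩, hcl⟩ := hQ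
  have hsub : ∀ r' a b, Q.E r' a b → r' = r ∧ Γ.E r a b := by
    intro r' a b h
    have := hcomp.1.2 r' a b h
    exact ⟨this.1, hCsub r a b (this.1 ▸ this.2)⟩
  exact ⟨⟨r, closed_isComponent_mono hadm hsub hcomp.2.1 hcl, hnt⟩, hcl⟩

/-- A loop of `Γ` distinct from the path `P` is a loop of some component of `Γ ∖ P`. -/
lemma IsLoopOf.mem_component {Q P Γ : CGraph V s} {r₀ : Fin s} (hadm : Γ.Admissible)
    (hP : P.IsRPath Γ r₀) (hQ : Q.IsLoopOf Γ) (hne : Q ≠ P) :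
    ∃ C, C.IsComponent (Γ.erase P) ∧ Q.IsLoopOf C := by
  obtain ⟨⟨r, hcomp, hnt⟩, hcl⟩ := hQ
  -- edges of Q survive in Γ ∖ P
  have hsurv : ∀ r' a b, Q.E r' a b → (Γ.erase P).E r (a) b ∧ r' = r := by
    intro r' a b h
    have hm := hcomp.1.2 r' a b h
    have hr' : r' = r := hm.1
    have hΓ : Γ.E r a b := hr' ▸ hm.2
    refine ⟨⟨hΓ, ?_⟩, hr'⟩
    intro hPE
    have hrr₀ : r = r₀ := (hP.1.1.2 r a b hPE).1
    subst hrr₀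
    have haQ : a ∈ Q.verts := Q.memL r' a b h
    have haP : a ∈ P.verts := P.memL r a b hPE
    exact hne (hcomp.eq_of_mem hP.1 haQ haP)
  obtain ⟨q₀, hq₀⟩ := Q.nonem
  have hq₀Γ : q₀ ∈ Γ.verts := hcomp.1.1 hq₀
  set Δ := Γ.erase P with hΔ
  have hq₀Δ : q₀ ∈ Δ.verts := hq₀Γ
  set C := Δ.compOf q₀ hq₀Δ with hC
  have hCcomp : C.IsComponent Δ := Δ.compOf_isComponent q₀ hq₀Δ
  have hQadjΔ : ∀ a b, Q.Adj a b → Δ.Adj a b := by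
    rintro a b ⟨r', h | h⟩
    · exact ⟨r, Or.inl (hsurv r' a b h).1⟩
    · exact ⟨r, Or.inr (hsurv r' b a h).1⟩
  have hQverts : Q.verts ⊆ C.verts := by
    intro w hw
    refine ⟨hcomp.1.1 hw, ?_⟩
    exact Relation.ReflTransGen.mono hQadjΔ _ _ (hcomp.2.1 q₀ hq₀ w hw)
  have hQE : ∀ r' a b, Q.E r' a b → r' = r ∧ C.E r a b := by
    intro r' a b h
    obtain ⟨hΔE, hr'⟩ := hsurv r' a b h
    exact ⟨hr', hCcomp.edge_of_memL (hQverts (Q.memL r' a b h)) hΔE⟩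
  refine ⟨C, hCcomp, ⟨r, ?_, hnt⟩, hcl⟩
  refine ⟨⟨hQverts, fun r' a b h => ?_⟩, hcomp.2.1, ?_⟩
  · obtain ⟨hr', hCE⟩ := hQE r' a b h
    exact ⟨hr', hr' ▸ hCE⟩
  · -- maximality within C.mono r via maximality within Γ.mono r
    intro C' hC'sub hC'conn hups
    have : C'.Subgraph (Γ.mono r) := by
      refine hC'sub.trans ⟨fun v hv => hCcomp.1.1 hv, fun r' a b h => ?_⟩
      exact ⟨h.1, (hCcomp.1.2 r' a b h.2).1⟩
    exact hcomp.2.2 C' this hC'conn hups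

lemma loop_of_component_ne_path {Q P C Γ : CGraph V s} (hC : C.IsComponent (Γ.erase P))
    (hQ : Q.IsLoopOf C) : Q ≠ P := by
  intro h
  subst h
  obtain ⟨⟨r, hcomp, hnt⟩, _⟩ := hQ
  obtain ⟨r', a, b, he⟩ := exists_edge_of_not_trivial hnt
  have hm := hcomp.1.2 r' a b he
  have hCE : C.E r a b := hm.1 ▸ hm.2
  have hΔE := hC.1.2 r a b hCE
  exact hΔE.2 (hm.1 ▸ he)

open Classical in
lemma loopCount_sum {Γ P : CGraph V s} {r₀ : Fin s} (hadm : Γ.Admissible)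
    (hP : P.IsRPath Γ r₀) :
    (Γ.loopCount : ℤ) =
      (∑ C ∈ (Γ.erase P).components_finite.toFinset, (C.loopCount : ℤ)) +
        (if P.Closed then 1 else 0) := by
  set K := (Γ.erase P).components_finite.toFinset with hK
  have hCsub : ∀ C ∈ K, ∀ r a b, C.E r a b → Γ.E r a b := by
    intro C hCmem r a b h
    exact (((mem_components_toFinset (Γ := Γ.erase P)).mp hCmem).1.2 r a b h).1
  have hdisj : ∀ C ∈ K, ∀ C' ∈ K, C ≠ C' → Disjoint (loopSet C) (loopSet C') := by
    intro C hCmem C' hC'mem hne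
    rw [Set.disjoint_left]
    intro Q hQ hQ'
    obtain ⟨q₀, hq₀⟩ := Q.nonem
    have h1 : q₀ ∈ C.verts := hQ.subgraph.1 hq₀
    have h2 : q₀ ∈ C'.verts := hQ'.subgraph.1 hq₀
    exact hne (((mem_components_toFinset (Γ := Γ.erase P)).mp hCmem).eq_of_mem
      ((mem_components_toFinset (Γ := Γ.erase P)).mp hC'mem) h1 h2)
  have hUnionCount : (⋃ C ∈ K, loopSet C).ncard = ∑ C ∈ K, C.loopCount := by
    rw [ncard_biUnion_helper K loopSet (fun C _ => loopSet_finite C) hdisj]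
    exact Finset.sum_congr rfl (fun C _ => (loopCount_eq_ncard C).symm)
  have hsubset : (⋃ C ∈ K, loopSet C) ⊆ Γ.loopSet := by
    intro Q hQ
    simp only [Set.mem_iUnion] at hQ
    obtain ⟨C, hCmem, hQ⟩ := hQ
    exact hQ.of_subgraph hadm (hCsub C hCmem)
  have hUfin : (⋃ C ∈ K, loopSet C).Finite := Γ.loopSet_finite.subset hsubset
  by_cases hcl : P.Closed
  · have hcover : Γ.loopSet = (⋃ C ∈ K, loopSet C) ∪ {P} := by
      apply Set.eq_of_subset_of_subset
      · intro Q hQ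
        by_cases hne : Q = P
        · exact Or.inr (by simp [hne])
        · obtain ⟨C, hCcomp, hQC⟩ := hQ.mem_component hadm hP hne
          exact Or.inl (Set.mem_biUnion
            ((mem_components_toFinset (Γ := Γ.erase P)).mpr hCcomp) hQC)
      · rintro Q (hQ | hQ)
        · exact hsubset hQ
        · rw [Set.mem_singleton_iff] at hQ
          subst hQ
          exact ⟨⟨r₀, hP⟩, hcl⟩
    have hdisjP : Disjoint (⋃ C ∈ K, loopSet C) ({P} : Set (CGraph V s)) := by
      rw [Set.disjoint_right]
      intro Q hQmem hQ
      rw [Set.mem_singleton_iff] at hQmem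
      simp only [Set.mem_iUnion] at hQ
      obtain ⟨C, hCmem, hQ⟩ := hQ
      exact loop_of_component_ne_path ((mem_components_toFinset (Γ := Γ.erase P)).mp hCmem)
        hQ hQmem
    rw [loopCount_eq_ncard, hcover,
      Set.ncard_union_eq hdisjP hUfin (Set.finite_singleton P), hUnionCount]
    simp [hcl]
  · have hcover : Γ.loopSet = ⋃ C ∈ K, loopSet C := by
      apply Set.eq_of_subset_of_subset
      · intro Q hQ
        have hne : Q ≠ P := by
          intro h
          exact hcl (h ▸ hQ.2)
        obtain ⟨C, hCcomp, hQC⟩ := hQ.mem_component hadm hP hne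
        exact Set.mem_biUnion ((mem_components_toFinset (Γ := Γ.erase P)).mpr hCcomp) hQC
      · exact hsubset
    rw [loopCount_eq_ncard, hcover, hUnionCount]
    simp [hcl]

end CGraph
namespace CGraph

variable {V : Type} {s : ℕ}

lemma IsPathOf.not_trivial {P Γ : CGraph V s} (hP : P.IsPathOf Γ) : ¬ Γ.Trivial := by
  obtain ⟨r, hP, hnt⟩ := hP
  obtain ⟨r', a, b, he⟩ := exists_edge_of_not_trivial hnt
  have := hP.1.2 r' a b he
  exact fun htriv => htriv r' a b this.2

lemma trivial_chi {Γ : CGraph V s} (htriv : Γ.Trivial) (hconn : Γ.Connected) :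
    Γ.chi = 1 := by
  obtain ⟨v, hv⟩ := Γ.nonem
  have hverts : Γ.verts = {v} := by
    apply Set.eq_singleton_iff_nonempty_unique_mem.mpr
    refine ⟨⟨v, hv⟩, ?_⟩
    intro w hw
    have h := hconn w hw v hv
    clear hw
    induction h with
    | refl => rfl
    | tail _ hadj =>
      obtain ⟨r, h | h⟩ := hadj
      · exact absurd h (htriv _ _ _)
      · exact absurd h (htriv _ _ _)
  have hV : Γ.vertCount = 1 := by
    rw [vertCount_eq_ncard, hverts, Set.ncard_singleton]
  have hE : Γ.edgeCount = 0 := by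
    rw [edgeCount_eq_ncard, Set.ncard_eq_zero Γ.edgeSet_finite]
    apply Set.eq_empty_iff_forall_notMem.mpr
    intro p hp
    exact htriv p.1 p.2.1 p.2.2 hp
  have hL : Γ.loopCount = 0 := by
    rw [loopCount_eq_ncard, Set.ncard_eq_zero Γ.loopSet_finite]
    apply Set.eq_empty_iff_forall_notMem.mpr
    intro Q hQ
    obtain ⟨⟨r, hcomp, hnt⟩, _⟩ := hQ
    obtain ⟨r', a, b, he⟩ := exists_edge_of_not_trivial hnt
    exact htriv r a b ((hcomp.1.2 r' a b he).1 ▸ (hcomp.1.2 r' a b he).2)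
  rw [chi, hV, hE, hL]
  norm_num

lemma admissible_of_le {C Γ : CGraph V s} (hadm : Γ.Admissible)
    (h : ∀ r a b, C.E r a b → Γ.E r a b) : C.Admissible :=
  ⟨fun r a b b' h₁ h₂ => hadm.1 r a b b' (h r a b h₁) (h r a b' h₂),
   fun r a a' b h₁ h₂ => hadm.2 r a a' b (h r a b h₁) (h r a' b h₂)⟩

lemma edgeCount_le_of_sub {C Γ : CGraph V s} (h : ∀ r a b, C.E r a b → Γ.E r a b) :
    C.edgeCount ≤ Γ.edgeCount := by
  rw [edgeCount_eq_ncard, edgeCount_eq_ncard]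
  exact Set.ncard_le_ncard (fun p hp => h p.1 p.2.1 p.2.2 hp) Γ.edgeSet_finite

/-- Every component of `Γ ∖ P` meets `P`, when `Γ` is connected. -/
lemma component_meets_path {Γ P C : CGraph V s} {r₀ : Fin s} (hconn : Γ.Connected)
    (hP : P.IsRPath Γ r₀) (hC : C.IsComponent (Γ.erase P)) :
    (C.verts ∩ P.verts).Nonempty := by
  obtain ⟨v, hv⟩ := C.nonem
  obtain ⟨p, hp⟩ := P.nonem
  have hvΓ : v ∈ Γ.verts := hC.1.1 hv
  have hpΓ : p ∈ Γ.verts := hP.1.1.1 hp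
  have hgen : ∀ w, Relation.ReflTransGen Γ.Adj w p → w ∈ C.verts →
      (C.verts ∩ P.verts).Nonempty := by
    intro w hreach
    induction hreach using Relation.ReflTransGen.head_induction_on with
    | refl => exact fun hw => ⟨p, hw, hp⟩
    | head hadj _ ih =>
      rename_i x y _
      intro hx
      obtain ⟨r, h | h⟩ := hadj
      · by_cases hPE : P.E r x y
        · exact ⟨x, hx, P.memL r x y hPE⟩
        · exact ih ((hC.closed_adj hx ⟨r, Or.inl ⟨h, hPE⟩⟩).1)
      · by_cases hPE : P.E r y x
        · exact ⟨x, hx, P.memR r y x hPE⟩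
        · exact ih ((hC.closed_adj hx ⟨r, Or.inr ⟨h, hPE⟩⟩).1)
  exact hgen v (hconn v hvΓ p hpΓ) hv

end CGraph
namespace CGraph

variable {V : Type} {s : ℕ}

lemma IsRPath.edges_le {P Γ : CGraph V s} {r₀ : Fin s} (hP : P.IsRPath Γ r₀) :
    ∀ r a b, P.E r a b → Γ.E r a b := by
  intro r a b h
  obtain ⟨hr, hΓ⟩ := hP.edge_color h
  rw [hr]
  exact hΓ

open Classical in
lemma key_identity {Γ P : CGraph V s} {r₀ : Fin s} (hadm : Γ.Admissible)
    (hP : P.IsRPath Γ r₀) :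
    Γ.chi = (∑ C ∈ (Γ.erase P).components_finite.toFinset, C.chi)
      - (P.vertCount : ℤ) + 1 := by
  set K := (Γ.erase P).components_finite.toFinset with hK
  have h1n : Γ.vertCount = ∑ C ∈ K, C.vertCount := vertCount_sum (Γ.erase P)
  have hEn : Γ.edgeCount = (∑ C ∈ K, C.edgeCount) + P.edgeCount := by
    rw [edgeCount_erase_add Γ P hP.edges_le, edgeCount_sum (Γ.erase P)]
  have hL := loopCount_sum hadm hP
  have hEP := hP.edgeCount_eq hadm
  have hsum : ∑ C ∈ K, C.chi = (∑ C ∈ K, (C.vertCount : ℤ))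
      - (∑ C ∈ K, (C.edgeCount : ℤ)) + (∑ C ∈ K, (C.loopCount : ℤ)) := by
    simp only [chi]
    rw [Finset.sum_add_distrib, Finset.sum_sub_distrib]
  have hVi : (Γ.vertCount : ℤ) = ∑ C ∈ K, (C.vertCount : ℤ) := by exact_mod_cast h1n
  have hEi : (Γ.edgeCount : ℤ) = (∑ C ∈ K, (C.edgeCount : ℤ)) + (P.edgeCount : ℤ) := by
    exact_mod_cast hEn
  rw [chi, hVi, hEi, hL, hsum]
  linarith [hEP]

open Classical in
theorem key_main : ∀ (n : ℕ) (Γ : CGraph V s), Γ.edgeCount ≤ n →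
    Γ.Connected → Γ.Admissible →
    Γ.chi ≤ 1 ∧ ∀ P : CGraph V s, P.IsPathOf Γ →
      ((∀ C : CGraph V s, C.IsComponent (Γ.erase P) →
        Nat.card ↥(C.verts ∩ P.verts) = 1 ∧ C.chi = 1) ↔ Γ.chi = 1) := by
  intro n
  induction n with
  | zero =>
    intro Γ hle hconn hadm
    have htriv : Γ.Trivial := by
      intro r a b h
      have hpos : 0 < Γ.edgeCount := by
        rw [edgeCount_eq_ncard]
        exact (Set.ncard_pos Γ.edgeSet_finite).mpr ⟨(r, a, b), h⟩
      omega
    exact ⟨le_of_eq (trivial_chi htriv hconn),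
      fun P hP => absurd htriv hP.not_trivial⟩
  | succ n ih =>
    intro Γ hle hconn hadm
    by_cases htriv : Γ.Trivial
    · exact ⟨le_of_eq (trivial_chi htriv hconn),
        fun P hP => absurd htriv hP.not_trivial⟩
    have keyP : ∀ P : CGraph V s, P.IsPathOf Γ →
        (Γ.chi ≤ 1 ∧
          ((∀ C : CGraph V s, C.IsComponent (Γ.erase P) →
            Nat.card ↥(C.verts ∩ P.verts) = 1 ∧ C.chi = 1) ↔ Γ.chi = 1)) := by
      intro P hPex
      obtain ⟨r₀, hP⟩ := hPex
      set K := (Γ.erase P).components_finite.toFinset with hK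
      -- induction applies to every component
      have hcomp : ∀ C ∈ K, C.chi ≤ 1 := by
        intro C hCmem
        have hCc : C.IsComponent (Γ.erase P) := mem_components_toFinset.mp hCmem
        have hsubE : ∀ r a b, C.E r a b → (Γ.erase P).E r a b := hCc.1.2
        have hCE' : ∀ r a b, C.E r a b → Γ.E r a b := fun r a b h => (hsubE r a b h).1
        have hb : C.edgeCount ≤ n := by
          have h1 : C.edgeCount ≤ (Γ.erase P).edgeCount := edgeCount_le_of_sub hsubE
          have h2 : Γ.edgeCount = (Γ.erase P).edgeCount + P.edgeCount :=
            edgeCount_erase_add Γ P hP.edges_le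
          have h3 : 0 < P.edgeCount := hP.edgeCount_pos
          omega
        exact (ih C hb hCc.2.1 (admissible_of_le hadm hCE')).1
      have hnfin : ∀ C : CGraph V s, (C.verts ∩ P.verts).Finite :=
        fun C => P.finite.subset Set.inter_subset_right
      have hnpos : ∀ C ∈ K, 1 ≤ (C.verts ∩ P.verts).ncard := by
        intro C hCmem
        have hCc : C.IsComponent (Γ.erase P) := mem_components_toFinset.mp hCmem
        have := component_meets_path hconn hP hCc
        have := (Set.ncard_pos (hnfin C)).mpr this
        omega
      have hPsub : P.verts ⊆ (Γ.erase P).verts := hP.1.1.1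
      have hnsum : ∑ C ∈ K, ((C.verts ∩ P.verts).ncard : ℤ) = (P.vertCount : ℤ) := by
        have := (Γ.erase P).ncard_inter_sum P.verts hPsub
        rw [vertCount_eq_ncard]
        exact_mod_cast this.symm
      have hid := key_identity hadm hP
      have hle1 : ∑ C ∈ K, C.chi ≤ ∑ C ∈ K, ((C.verts ∩ P.verts).ncard : ℤ) := by
        apply Finset.sum_le_sum
        intro C hCmem
        calc C.chi ≤ 1 := hcomp C hCmem
        _ ≤ ((C.verts ∩ P.verts).ncard : ℤ) := by exact_mod_cast hnpos C hCmem
      refine ⟨by linarith, ?_, ?_⟩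
      · intro hprop
        have heach : ∀ C ∈ K, C.chi = ((C.verts ∩ P.verts).ncard : ℤ) := by
          intro C hCmem
          obtain ⟨hn1, hc1⟩ := hprop C (mem_components_toFinset.mp hCmem)
          rw [Nat.card_coe_set_eq] at hn1
          rw [hc1, hn1]
          norm_num
        have : ∑ C ∈ K, C.chi = ∑ C ∈ K, ((C.verts ∩ P.verts).ncard : ℤ) :=
          Finset.sum_congr rfl heach
        linarith
      · intro hchi C hCcomp
        have hCmem : C ∈ K := mem_components_toFinset.mpr hCcomp
        have hsums : ∑ C ∈ K, C.chi = ∑ C ∈ K, ((C.verts ∩ P.verts).ncard : ℤ) := by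
          linarith
        have heach := (Finset.sum_eq_sum_iff_of_le
          (fun C hCmem => by
            calc C.chi ≤ 1 := hcomp C hCmem
            _ ≤ ((C.verts ∩ P.verts).ncard : ℤ) := by exact_mod_cast hnpos C hCmem)).mp hsums
        have hCeq := heach C hCmem
        have hC1 : C.chi ≤ 1 := hcomp C hCmem
        have hCn : 1 ≤ ((C.verts ∩ P.verts).ncard : ℤ) := by exact_mod_cast hnpos C hCmem
        have hcard : (C.verts ∩ P.verts).ncard = 1 := by omega
        constructor
        · rw [Nat.card_coe_set_eq]
          exact hcard
        · omega
    obtain ⟨P₀, hP₀⟩ := Γ.exists_path_of_not_trivial htriv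
    exact ⟨(keyP P₀ hP₀).1, fun P hP => (keyP P hP).2⟩

end CGraph
/-- If `Γ` is a connected admissible graph then `χ(Γ) ≤ 1`; moreover `χ(Γ) = 1`
iff every path `P` of `Γ` has the property that every connected component `C` of
`Γ ∖ P` has exactly one vertex in common with `P` and satisfies `χ(C) = 1`; and if
some single path of `Γ` has this property, then already `χ(Γ) = 1`. -/
theorem chi_le_one_of_connected_admissible {V : Type} {s : ℕ} (hs : 0 < s)
    (Γ : CGraph V s) (hconn : Γ.Connected) (hadm : Γ.Admissible) :
    Γ.chi ≤ 1 ∧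
    (Γ.chi = 1 ↔ ∀ P : CGraph V s, P.IsPathOf Γ →
      ∀ C : CGraph V s, C.IsComponent (Γ.erase P) →
        Nat.card ↥(C.verts ∩ P.verts) = 1 ∧ C.chi = 1) ∧
    ((∃ P : CGraph V s, P.IsPathOf Γ ∧
      ∀ C : CGraph V s, C.IsComponent (Γ.erase P) →
        Nat.card ↥(C.verts ∩ P.verts) = 1 ∧ C.chi = 1) → Γ.chi = 1) := by
  have main := CGraph.key_main Γ.edgeCount Γ le_rfl hconn hadm
  refine ⟨main.1, ⟨fun hchi P hP C hC => (main.2 P hP).mpr hchi C hC, ?_⟩, ?_⟩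
  · intro hall
    by_cases htriv : Γ.Trivial
    · exact CGraph.trivial_chi htriv hconn
    · obtain ⟨P₀, hP₀⟩ := Γ.exists_path_of_not_trivial htriv
      exact (main.2 P₀ hP₀).mp (hall P₀ hP₀)
  · rintro ⟨P, hP, hprop⟩
    exact (main.2 P hP).mp hprop
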